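/- Let a, b > 0, U₀ = diag(a,b), U₁ = diag(b,a), and let Q ∈ SO(2) be the rotation with entries cos γ = 2ab/(a²+b²), sin γ = (a²-b²)/(a²+b²). Then U₀ - Q U₁ = ((a²-b²)/(a²+b²)) · (a, -b)ᵀ ⊗ (1, 1), i.e., U₀ - QU₁ equals the outer product of the column vector ((a²-b²)/(a²+b²))·(a,-b)ᵀ with the row vector (1,1). In particular U₀ - QU₁ has rank at most one. -/

import Mathlib

open Matrix

theorem rank_one_connection_formula (a b : ℝ) (ha : 0 < a) (hb : 0 < b) :
    (!![a, 0; 0, b] -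
        !![2 * a * b / (a ^ 2 + b ^ 2), -((a ^ 2 - b ^ 2) / (a ^ 2 + b ^ 2));
           (a ^ 2 - b ^ 2) / (a ^ 2 + b ^ 2), 2 * a * b / (a ^ 2 + b ^ 2)] * !![b, 0; 0, a])
      = vecMulVec (((a ^ 2 - b ^ 2) / (a ^ 2 + b ^ 2)) • ![a, -b]) ![1, 1] ∧
    (!![a, 0; 0, b] -
        !![2 * a * b / (a ^ 2 + b ^ 2), -((a ^ 2 - b ^ 2) / (a ^ 2 + b ^ 2));
           (a ^ 2 - b ^ 2) / (a ^ 2 + b ^ 2), 2 * a * b / (a ^ 2 + b ^ 2)] * !![b, 0; 0, a]).rank ≤ 1 := by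
  have hab : a ^ 2 + b ^ 2 ≠ 0 := by positivity
  have heq : (!![a, 0; 0, b] -
        !![2 * a * b / (a ^ 2 + b ^ 2), -((a ^ 2 - b ^ 2) / (a ^ 2 + b ^ 2));
           (a ^ 2 - b ^ 2) / (a ^ 2 + b ^ 2), 2 * a * b / (a ^ 2 + b ^ 2)] * !![b, 0; 0, a])
      = vecMulVec (((a ^ 2 - b ^ 2) / (a ^ 2 + b ^ 2)) • ![a, -b]) ![1, 1] := by
    ext i j
    fin_cases i <;> fin_cases j <;>
      simp [vecMulVec, Matrix.mul_apply, Fin.sum_univ_two] <;> field_simp <;> ring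
  refine ⟨heq, ?_⟩
  rw [heq, vecMulVec_eq Unit]
  calc (replicateCol Unit (((a ^ 2 - b ^ 2) / (a ^ 2 + b ^ 2)) • ![a, -b]) * replicateRow Unit (![1, 1] : Fin 2 → ℝ)).rank
      ≤ (replicateCol Unit (((a ^ 2 - b ^ 2) / (a ^ 2 + b ^ 2)) • ![a, -b])).rank := rank_mul_le_left _ _
    _ ≤ Fintype.card Unit := rank_le_card_width _
    _ = 1 := rfl
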